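/- arXiv:2010.05727 — 9 statements merged into one kernel-verified Lean document; each statement's English description precedes it below -/
import Mathlib

section
/- Let p > 1 and let 0 < ε < p − 1. Set ζ(ε) = p^p·ε/(p−ε−1)^p. Then for all real numbers a, b > 0 one has |b − a|^{p−2}(b − a)(a^{−ε} − b^{−ε}) ≥ ζ(ε)·|b^{(p−ε−1)/p} − a^{(p−ε−1)/p}|^p. -/
open MeasureTheory Set Real

private lemma aux_two_point (p ε : ℝ) (hp : 1 < p) (hε0 : 0 < ε) (hε1 : ε < p - 1)
    (a b : ℝ) (ha : 0 < a) (hab : a < b) :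
    (p ^ p * ε / (p - ε - 1) ^ p) * (b ^ ((p - ε - 1) / p) - a ^ ((p - ε - 1) / p)) ^ p ≤
      (b - a) ^ (p - 1) * (a ^ (-ε) - b ^ (-ε)) := by
  have hp0 : (0:ℝ) < p := lt_trans one_pos hp
  have hnum : 0 < p - ε - 1 := by linarith
  set γ : ℝ := (p - ε - 1) / p with hγdef
  have hγpos : 0 < γ := div_pos hnum hp0
  have hb : 0 < b := lt_trans ha hab
  have hD : 0 < b - a := sub_pos.mpr hab
  set r : ℝ := -(ε + 1) / p with hrdef
  have hr1 : r + 1 = γ := by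
    rw [hrdef, hγdef, div_add_one (ne_of_gt hp0)]; congr 1; ring
  have hrm1 : -1 < r := by
    rw [hrdef, lt_div_iff₀ hp0]; linarith
  have hrp : r * p = -(ε + 1) := by
    rw [hrdef]; field_simp
  -- continuity facts
  have hfc : ContinuousOn (fun t : ℝ => t ^ r) (Icc a b) := by
    apply ContinuousOn.rpow_const continuousOn_id
    intro x hx
    exact Or.inl (ne_of_gt (lt_of_lt_of_le ha hx.1))
  have hgc : Continuous (fun x : ℝ => x ^ p) := continuous_rpow_const hp0.le
  have hfi : IntegrableOn (fun t : ℝ => t ^ r) (Ioc a b) volume :=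
    (hfc.integrableOn_Icc).mono_set Ioc_subset_Icc_self
  have hgfi : IntegrableOn ((fun x : ℝ => x ^ p) ∘ fun t : ℝ => t ^ r) (Ioc a b) volume :=
    ((hgc.comp_continuousOn hfc).integrableOn_Icc).mono_set Ioc_subset_Icc_self
  have h0 : volume (Ioc a b) ≠ 0 := by
    simp [Real.volume_Ioc, hD, ne_of_gt]
  have hT : volume (Ioc a b) ≠ ⊤ := measure_Ioc_lt_top.ne
  have hfs : ∀ᵐ x ∂(volume.restrict (Ioc a b)), (fun t : ℝ => t ^ r) x ∈ Ici (0:ℝ) := by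
    filter_upwards [ae_restrict_mem measurableSet_Ioc] with x hx
    exact Real.rpow_nonneg (le_of_lt (lt_trans ha hx.1)) r
  have key := (convexOn_rpow hp.le).map_set_average_le
      (hgc.continuousOn) isClosed_Ici h0 hT hfs hfi hgfi
  -- compute the two integrals
  have hvol : volume.real (Ioc a b) = b - a := by
    rw [measureReal_def, Real.volume_Ioc, ENNReal.toReal_ofReal hD.le]
  have hI1 : ∫ x in Ioc a b, x ^ r = (b ^ γ - a ^ γ) / γ := by
    rw [← intervalIntegral.integral_of_le hab.le, integral_rpow (Or.inl hrm1), hr1]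
  have hI2 : ∫ x in Ioc a b, (x ^ r) ^ p = (a ^ (-ε) - b ^ (-ε)) / ε := by
    rw [setIntegral_congr_fun measurableSet_Ioc
      (fun x hx => (Real.rpow_mul (le_of_lt (lt_trans ha hx.1)) r p).symm)]
    rw [hrp, ← intervalIntegral.integral_of_le hab.le,
      integral_rpow (Or.inr ⟨by intro h; rw [neg_eq_iff_eq_neg] at h; nlinarith, by
        simp [Set.uIcc_of_le hab.le]; intro h; linarith⟩)]
    have : -(ε + 1) + 1 = -ε := by ring
    rw [this]
    rw [div_eq_div_iff (by intro h; rw [neg_eq_zero] at h; linarith) (ne_of_gt hε0)]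
    ring
  rw [setAverage_eq, setAverage_eq, hvol, hI1, hI2, smul_eq_mul, smul_eq_mul] at key
  -- now pure algebra
  set G : ℝ := b ^ γ - a ^ γ with hGdef
  set A : ℝ := a ^ (-ε) - b ^ (-ε) with hAdef
  have hG : 0 ≤ G := sub_nonneg.mpr (Real.rpow_le_rpow ha.le hab.le hγpos.le)
  have hA : 0 < A := sub_pos.mpr (Real.rpow_lt_rpow_of_neg ha hab (by linarith : -ε < 0))
  -- key : (b-a)⁻¹ * (G/γ) ^ p ≤ (b-a)⁻¹ * (A/ε)  (avg form)
  have hγp : (0:ℝ) < γ ^ p := Real.rpow_pos_of_pos hγpos p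
  have hDp : (0:ℝ) < (b - a) ^ p := Real.rpow_pos_of_pos hD p
  have key2 : ((b - a)⁻¹ * (G / γ)) ^ p ≤ (b - a)⁻¹ * (A / ε) := key
  have hL : ((b - a)⁻¹ * (G / γ)) ^ p = G ^ p / (γ ^ p * (b - a) ^ p) := by
    rw [show (b - a)⁻¹ * (G / γ) = G / (γ * (b - a)) by rw [mul_comm, ← div_eq_mul_inv, div_div],
      Real.div_rpow hG (by positivity), Real.mul_rpow hγpos.le hD.le]
  rw [hL] at key2
  have hcoef : p ^ p * ε / (p - ε - 1) ^ p = ε / γ ^ p := by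
    rw [hγdef, Real.div_rpow hnum.le hp0.le, div_div_eq_mul_div, mul_comm]
  rw [hcoef]
  have hDsplit : (b - a) ^ p = (b - a) ^ (p - 1) * (b - a) := by
    rw [← Real.rpow_add_one (ne_of_gt hD) (p - 1)]
    congr 1; ring
  have hDp1 : (0:ℝ) < (b - a) ^ (p - 1) := Real.rpow_pos_of_pos hD (p - 1)
  have hR : (b - a)⁻¹ * (A / ε) = A / (ε * (b - a)) := by
    rw [mul_comm, ← div_eq_mul_inv, div_div]
  rw [hR, div_le_div_iff₀ (by positivity) (by positivity), hDsplit] at key2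
  rw [div_mul_eq_mul_div, div_le_iff₀ hγp]
  nlinarith [mul_pos hγp hDp1, hD, hG, hA, key2]

/-- Lemma 6.2, general case: for `p > 1`, `0 < ε < p - 1` and `ζ(ε) = p^p ε/(p-ε-1)^p`,
for all `a, b > 0` one has
`|b-a|^{p-2}(b-a)(a^{-ε} - b^{-ε}) ≥ ζ(ε) |b^{(p-ε-1)/p} - a^{(p-ε-1)/p}|^p`. -/
theorem two_point_log_inequality (p ε : ℝ) (hp : 1 < p) (hε0 : 0 < ε) (hε1 : ε < p - 1) :
    ∀ a b : ℝ, 0 < a → 0 < b →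
      |b - a| ^ (p - 2) * (b - a) * (a ^ (-ε) - b ^ (-ε)) ≥
        (p ^ p * ε / (p - ε - 1) ^ p) *
          |b ^ ((p - ε - 1) / p) - a ^ ((p - ε - 1) / p)| ^ p := by
  intro a b ha hb
  have hp0 : (0:ℝ) < p := lt_trans one_pos hp
  have hγpos : 0 < (p - ε - 1) / p := div_pos (by linarith) hp0
  rcases lt_trichotomy a b with hab | hab | hab
  · have hD : 0 < b - a := sub_pos.mpr hab
    have habs : |b - a| = b - a := abs_of_pos hD
    have hG : a ^ ((p - ε - 1) / p) ≤ b ^ ((p - ε - 1) / p) :=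
      Real.rpow_le_rpow ha.le hab.le hγpos.le
    rw [habs, abs_of_nonneg (sub_nonneg.mpr hG)]
    have hsplit : (b - a) ^ (p - 2) * (b - a) = (b - a) ^ (p - 1) := by
      rw [← Real.rpow_add_one (ne_of_gt hD) (p - 2)]
      congr 1; ring
    rw [hsplit]
    exact aux_two_point p ε hp hε0 hε1 a b ha hab
  · subst hab
    simp [Real.zero_rpow (ne_of_gt hp0)]
  · have hD : 0 < a - b := sub_pos.mpr hab
    have habs : |b - a| = a - b := by rw [abs_sub_comm, abs_of_pos hD]
    have hG : b ^ ((p - ε - 1) / p) ≤ a ^ ((p - ε - 1) / p) :=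
      Real.rpow_le_rpow hb.le hab.le hγpos.le
    have habs2 : |b ^ ((p - ε - 1) / p) - a ^ ((p - ε - 1) / p)|
        = a ^ ((p - ε - 1) / p) - b ^ ((p - ε - 1) / p) := by
      rw [abs_sub_comm, abs_of_nonneg (sub_nonneg.mpr hG)]
    rw [habs, habs2]
    have key := aux_two_point p ε hp hε0 hε1 b a hb hab
    have hsplit : (a - b) ^ (p - 2) * (a - b) = (a - b) ^ (p - 1) := by
      rw [← Real.rpow_add_one (ne_of_gt hD) (p - 2)]
      congr 1; ring
    have : (a - b) ^ (p - 2) * (b - a) * (a ^ (-ε) - b ^ (-ε))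
        = (a - b) ^ (p - 1) * (b ^ (-ε) - a ^ (-ε)) := by
      rw [← hsplit]; ring
    rw [this]
    exact key
end

section
/- Let p > 1 and let 0 < ε < p − 1 satisfy additionally 0 < p − ε − 1 < 1. Set ζ(ε) = p^p·ε/(p−ε−1). Then for all real numbers a, b > 0 one has |b − a|^{p−2}(b − a)(a^{−ε} − b^{−ε}) ≥ ζ(ε)·|b^{(p−ε−1)/p} − a^{(p−ε−1)/p}|^p. -/
open MeasureTheory intervalIntegral Real Set Filter

lemma key_holder (p ε : ℝ) (hp : 1 < p) (hε0 : 0 < ε) (hε1 : ε < p - 1)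
    (a b : ℝ) (ha : 0 < a) (hab : a < b) :
    (b ^ ((p - ε - 1) / p) - a ^ ((p - ε - 1) / p)) / ((p - ε - 1) / p) ≤
      ((a ^ (-ε) - b ^ (-ε)) / ε) ^ (1 / p) * (b - a) ^ ((p - 1) / p) := by
  have hb : 0 < b := ha.trans hab
  have hp0 : (0:ℝ) < p := by linarith
  have hσ : 0 < p - ε - 1 := by linarith
  have hq : Real.HolderConjugate p (p / (p - 1)) := (Real.holderConjugate_iff_eq_conjExponent hp).mpr rfl
  set μ := volume.restrict (Set.Ioc a b) with hμ
  haveI : IsFiniteMeasure μ := by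
    constructor
    rw [hμ, Measure.restrict_apply MeasurableSet.univ, Set.univ_inter, Real.volume_Ioc]
    exact ENNReal.ofReal_lt_top
  have hfm : Measurable fun t : ℝ => t ^ ((-ε - 1) / p) := by fun_prop
  have hexp_nonpos : (-ε - 1) / p ≤ 0 :=
    div_nonpos_of_nonpos_of_nonneg (by linarith) hp0.le
  have hfb : MemLp (fun t : ℝ => t ^ ((-ε - 1) / p)) (ENNReal.ofReal p) μ := by
    refine MemLp.of_bound hfm.aestronglyMeasurable (a ^ ((-ε - 1) / p)) ?_
    rw [hμ, ae_restrict_iff' measurableSet_Ioc]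
    refine Eventually.of_forall fun t ht => ?_
    rw [Real.norm_of_nonneg (Real.rpow_nonneg (le_of_lt (ha.trans ht.1)) _)]
    exact Real.rpow_le_rpow_of_nonpos ha ht.1.le hexp_nonpos
  have hgb : MemLp (fun _ : ℝ => (1:ℝ)) (ENNReal.ofReal (p / (p - 1))) μ := memLp_const 1
  have hfnn : 0 ≤ᵐ[μ] fun t : ℝ => t ^ ((-ε - 1) / p) := by
    filter_upwards [ae_restrict_mem measurableSet_Ioc] with t ht
    exact Real.rpow_nonneg (le_of_lt (ha.trans ht.1)) _
  have holder := integral_mul_le_Lp_mul_Lq_of_nonneg hq hfnn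
    (Eventually.of_forall fun _ => zero_le_one) hfb hgb
  have E1 : ∫ t, (fun t : ℝ => t ^ ((-ε - 1) / p)) t * (fun _ : ℝ => (1:ℝ)) t ∂μ =
      (b ^ ((p - ε - 1) / p) - a ^ ((p - ε - 1) / p)) / ((p - ε - 1) / p) := by
    simp only [mul_one, hμ]
    rw [← intervalIntegral.integral_of_le hab.le,
      integral_rpow (Or.inl ((lt_div_iff₀ hp0).mpr (by linarith)))]
    have h : (-ε - 1) / p + 1 = (p - ε - 1) / p := by field_simp; ring
    rw [h]
  have E2 : ∫ t, (fun t : ℝ => t ^ ((-ε - 1) / p)) t ^ p ∂μ =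
      (a ^ (-ε) - b ^ (-ε)) / ε := by
    rw [hμ]
    rw [setIntegral_congr_fun measurableSet_Ioc
      (g := fun t : ℝ => t ^ (-ε - 1)) (fun t ht => by
        simp only
        rw [← Real.rpow_mul (le_of_lt (ha.trans ht.1))]
        congr 1
        field_simp)]
    rw [← intervalIntegral.integral_of_le hab.le,
      integral_rpow (Or.inr ⟨(by intro h; apply hε0.ne'; linarith : -ε - 1 ≠ -1), Set.notMem_uIcc_of_lt ha hb⟩)]
    have h : -ε - 1 + 1 = -ε := by ring
    rw [h]
    rw [div_eq_div_iff (by linarith : -ε ≠ 0) hε0.ne']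
    ring
  have E3 : ∫ t, (fun _ : ℝ => (1:ℝ)) t ^ (p / (p - 1)) ∂μ = b - a := by
    simp only [Real.one_rpow, hμ, MeasureTheory.integral_const, smul_eq_mul, mul_one, measureReal_def,
      Measure.restrict_apply MeasurableSet.univ, Set.univ_inter, Real.volume_Ioc,
      ENNReal.toReal_ofReal (by linarith : (0:ℝ) ≤ b - a)]
  rw [E1, E2, E3] at holder
  rwa [one_div_div] at holder

lemma main_lt (p ε : ℝ) (hp : 1 < p) (hε0 : 0 < ε) (hε1 : ε < p - 1)
    (h0 : 0 < p - ε - 1) (h1 : p - ε - 1 < 1)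
    (a b : ℝ) (ha : 0 < a) (hab : a < b) :
    |b - a| ^ (p - 2) * (b - a) * (a ^ (-ε) - b ^ (-ε)) ≥
      (p ^ p * ε / (p - ε - 1)) *
        |b ^ ((p - ε - 1) / p) - a ^ ((p - ε - 1) / p)| ^ p := by
  have hb : 0 < b := ha.trans hab
  have hp0 : (0:ℝ) < p := by linarith
  have hD0 : 0 < b - a := sub_pos.mpr hab
  set σ : ℝ := p - ε - 1 with hσdef
  set γ : ℝ := σ / p with hγdef
  have hγ : 0 < γ := div_pos h0 hp0
  set A : ℝ := (a ^ (-ε) - b ^ (-ε)) / ε with hAdef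
  set I : ℝ := (b ^ γ - a ^ γ) / γ with hIdef
  have hA0 : 0 ≤ A := by
    apply div_nonneg _ hε0.le
    have := Real.rpow_lt_rpow_of_neg ha hab (neg_lt_zero.mpr hε0)
    linarith
  have hI0 : 0 ≤ I := by
    apply div_nonneg _ hγ.le
    have := Real.rpow_le_rpow ha.le hab.le hγ.le
    linarith
  have key : I ≤ A ^ (1 / p) * (b - a) ^ ((p - 1) / p) :=
    key_holder p ε hp hε0 hε1 a b ha hab
  have hIp : I ^ p ≤ A * (b - a) ^ (p - 1) := by
    have h2 : (A ^ (1 / p) * (b - a) ^ ((p - 1) / p)) ^ p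
        = A * (b - a) ^ (p - 1) := by
      rw [Real.mul_rpow (Real.rpow_nonneg hA0 _) (Real.rpow_nonneg hD0.le _),
        ← Real.rpow_mul hA0, ← Real.rpow_mul hD0.le,
        show 1 / p * p = (1:ℝ) by field_simp,
        show (p - 1) / p * p = p - 1 by field_simp, Real.rpow_one]
    calc I ^ p ≤ (A ^ (1 / p) * (b - a) ^ ((p - 1) / p)) ^ p :=
          Real.rpow_le_rpow hI0 key hp0.le
      _ = A * (b - a) ^ (p - 1) := h2
  -- rewrite LHS and RHS
  have habs1 : |b - a| = b - a := abs_of_pos hD0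
  have habs2 : |b ^ γ - a ^ γ| = b ^ γ - a ^ γ := by
    apply abs_of_nonneg
    have := Real.rpow_le_rpow ha.le hab.le hγ.le
    linarith
  rw [habs1, habs2]
  have hpow : (b - a) ^ (p - 2) * (b - a) = (b - a) ^ (p - 1) := by
    nth_rewrite 2 [show b - a = (b - a) ^ (1:ℝ) by rw [Real.rpow_one]]
    rw [← Real.rpow_add hD0]
    congr 1
    ring
  rw [hpow]
  have hdiff : b ^ γ - a ^ γ = γ * I := by
    rw [hIdef]; field_simp
  rw [hdiff]
  have hγIp : (γ * I) ^ p = γ ^ p * I ^ p := Real.mul_rpow hγ.le hI0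
  rw [hγIp]
  have hconst : p ^ p * ε / σ * γ ^ p = ε * σ ^ (p - 1) := by
    rw [hγdef, Real.div_rpow h0.le hp0.le, Real.rpow_sub h0, Real.rpow_one]
    have hpp : (0:ℝ) < p ^ p := Real.rpow_pos_of_pos hp0 p
    field_simp
  have hεA : a ^ (-ε) - b ^ (-ε) = ε * A := by
    rw [hAdef]; field_simp
  rw [hεA,
    show p ^ p * ε / σ * (γ ^ p * I ^ p) = p ^ p * ε / σ * γ ^ p * I ^ p from by ring, hconst]
  have hσ1 : σ ^ (p - 1) ≤ 1 := Real.rpow_le_one h0.le h1.le (by linarith)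
  have hDp : (0:ℝ) ≤ (b - a) ^ (p - 1) := Real.rpow_nonneg hD0.le _
  calc ε * σ ^ (p - 1) * I ^ p ≤ ε * σ ^ (p - 1) * (A * (b - a) ^ (p - 1)) := by
        apply mul_le_mul_of_nonneg_left hIp
        positivity
    _ ≤ ε * 1 * (A * (b - a) ^ (p - 1)) := by
        apply mul_le_mul_of_nonneg_right _ (by positivity)
        apply mul_le_mul_of_nonneg_left hσ1 hε0.le
    _ = (b - a) ^ (p - 1) * (ε * A) := by ring

/-- Lemma 6.2, case `0 < p - ε - 1 < 1`: with `ζ(ε) = p^p ε/(p-ε-1)`, for all `a, b > 0`,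
`|b-a|^{p-2}(b-a)(a^{-ε} - b^{-ε}) ≥ ζ(ε) |b^{(p-ε-1)/p} - a^{(p-ε-1)/p}|^p`. -/
theorem two_point_log_inequality_small_exponent (p ε : ℝ) (hp : 1 < p)
    (hε0 : 0 < ε) (hε1 : ε < p - 1) (h0 : 0 < p - ε - 1) (h1 : p - ε - 1 < 1) :
    ∀ a b : ℝ, 0 < a → 0 < b →
      |b - a| ^ (p - 2) * (b - a) * (a ^ (-ε) - b ^ (-ε)) ≥
        (p ^ p * ε / (p - ε - 1)) *
          |b ^ ((p - ε - 1) / p) - a ^ ((p - ε - 1) / p)| ^ p := by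
  intro a b ha hb
  rcases lt_trichotomy a b with hab | hab | hab
  · exact main_lt p ε hp hε0 hε1 h0 h1 a b ha hab
  · subst hab
    simp [Real.zero_rpow (by positivity : p ≠ 0)]
  · have h := main_lt p ε hp hε0 hε1 h0 h1 b a hb hab
    have e1 : |b - a| ^ (p - 2) * (b - a) * (a ^ (-ε) - b ^ (-ε)) =
        |a - b| ^ (p - 2) * (a - b) * (b ^ (-ε) - a ^ (-ε)) := by
      rw [abs_sub_comm]; ring
    have e2 : |b ^ ((p - ε - 1) / p) - a ^ ((p - ε - 1) / p)| =
        |a ^ ((p - ε - 1) / p) - b ^ ((p - ε - 1) / p)| := abs_sub_comm _ _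
    rw [e1, e2]
    exact h
end

section
/- Let p > 1, let 0 < ε < p − 1, let r = ⌈p⌉ be the smallest integer greater than or equal to p, and let s, t be real numbers with 1 < s < 2 and t > 1. If t − 1 ≥ (r·2^{r−1}/ε)·t·(s − 1), then s − 1 ≤ t^{ε} − s^{p} (equivalently, s^p + s − 2 ≤ t^{ε} − 1). -/
/-- Case (ii) in the proof of Lemma 6.1: for `p > 1`, `0 < ε < p - 1`, `r = ⌈p⌉`,
`1 < s < 2`, `t > 1`, if `t - 1 ≥ (r 2^{r-1}/ε) t (s-1)` then `s - 1 ≤ t^ε - s^p`. -/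
theorem case_ii_estimate (p ε s t : ℝ) (hp : 1 < p) (hε0 : 0 < ε) (hε1 : ε < p - 1)
    (hs1 : 1 < s) (hs2 : s < 2) (ht : 1 < t)
    (h : t - 1 ≥ ((⌈p⌉₊ : ℝ) * 2 ^ (⌈p⌉₊ - 1) / ε) * t * (s - 1)) :
    s - 1 ≤ t ^ ε - s ^ p := by
  set r : ℕ := ⌈p⌉₊ with hr
  have hr2 : 2 ≤ r := by
    have : 1 < r := Nat.lt_ceil.mpr (by exact_mod_cast hp)
    omega
  have hpr : p ≤ (r : ℝ) := Nat.le_ceil p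
  have ht0 : (0 : ℝ) < t := lt_trans one_pos ht
  have hs0 : (0 : ℝ) ≤ s := by linarith
  -- s^p ≤ s^r
  have hsp : s ^ p ≤ s ^ (r : ℕ) := by
    calc s ^ p ≤ s ^ (r : ℝ) := Real.rpow_le_rpow_of_exponent_le hs1.le hpr
    _ = s ^ (r : ℕ) := Real.rpow_natCast s r
  -- geometric sum bound : s^r - 1 ≤ (s-1) * (1 + (r-1)*2^(r-1))
  have hgeom : s ^ r - 1 = (s - 1) * ∑ i ∈ Finset.range r, s ^ i := by
    rw [mul_comm, geom_sum_mul]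
  have hsum : ∑ i ∈ Finset.range r, s ^ i ≤ 1 + ((r : ℝ) - 1) * 2 ^ (r - 1) := by
    obtain ⟨m, hm⟩ : ∃ m, r = m + 1 := ⟨r - 1, by omega⟩
    rw [hm, Finset.sum_range_succ']
    have h1 : ∑ i ∈ Finset.range m, s ^ (i + 1) ≤ (m : ℝ) * 2 ^ m := by
      calc ∑ i ∈ Finset.range m, s ^ (i + 1)
          ≤ ∑ i ∈ Finset.range m, (2:ℝ) ^ m := by
            apply Finset.sum_le_sum
            intro i hi
            have hi' : i + 1 ≤ m := Finset.mem_range.mp hi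
            calc s ^ (i + 1) ≤ (2:ℝ) ^ (i + 1) := pow_le_pow_left₀ hs0 hs2.le _
            _ ≤ (2:ℝ) ^ m := pow_le_pow_right₀ one_le_two hi'
        _ = (m : ℝ) * 2 ^ m := by rw [Finset.sum_const, Finset.card_range, nsmul_eq_mul]
    have hm' : (r : ℝ) - 1 = (m : ℝ) := by rw [hm]; push_cast; ring
    have hm'' : r - 1 = m := by omega
    simp only [pow_zero, Nat.add_sub_cancel]
    push_cast
    linarith
  have hsum0 : (0:ℝ) ≤ ∑ i ∈ Finset.range r, s ^ i :=
    Finset.sum_nonneg fun i _ => pow_nonneg hs0 i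
  have hsr : s ^ r - 1 ≤ (s - 1) * (1 + ((r : ℝ) - 1) * 2 ^ (r - 1)) := by
    rw [hgeom]
    exact mul_le_mul_of_nonneg_left hsum (by linarith)
  -- t^ε ≥ 1 + ε*(t-1)/t
  have hlog : 1 - 1/t ≤ Real.log t := by
    have h1 : Real.log (1/t) ≤ 1/t - 1 := Real.log_le_sub_one_of_pos (by positivity)
    rw [one_div, Real.log_inv] at h1
    rw [one_div]
    linarith
  have htε : 1 + ε * (1 - 1/t) ≤ t ^ ε := by
    rw [Real.rpow_def_of_pos ht0]
    have hexp := Real.add_one_le_exp (Real.log t * ε)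
    nlinarith [mul_le_mul_of_nonneg_right hlog hε0.le]
  -- 2^(r-1) ≥ 2
  have h2r : (2:ℝ) ≤ 2 ^ (r - 1) := by
    calc (2:ℝ) = 2 ^ 1 := (pow_one 2).symm
    _ ≤ 2 ^ (r - 1) := pow_le_pow_right₀ one_le_two (by omega)
  -- from h : ε*(t-1)/t ≥ C*(s-1) where C = r*2^(r-1)
  have hC : (r : ℝ) * 2 ^ (r - 1) * (s - 1) ≤ ε * (t - 1) / t := by
    have h' : ((r : ℝ) * 2 ^ (r - 1) / ε) * t * (s - 1) ≤ t - 1 := h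
    rw [ge_iff_le, div_mul_eq_mul_div, div_mul_eq_mul_div, div_le_iff₀ hε0] at h
    rw [le_div_iff₀ ht0]
    nlinarith
  have hr1 : (1:ℝ) ≤ (r:ℝ) := by exact_mod_cast Nat.one_le_iff_ne_zero.mpr (by omega)
  have hkey : (s - 1) * (2 + ((r : ℝ) - 1) * 2 ^ (r - 1)) ≤ (r : ℝ) * 2 ^ (r - 1) * (s - 1) := by
    nlinarith [pow_nonneg (by norm_num : (0:ℝ) ≤ 2) (r-1)]
  have hεt : ε * (1 - 1/t) = ε * (t - 1) / t := by field_simp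
  nlinarith [htε, hsp, hsr, hC, hkey]
end

section
/- Let p > 1. There exists a constant C = C(p) > 0, depending only on p, such that for all real numbers a ≥ b ≥ 0 and all ψ₁, ψ₂ ≥ 0, one has (a − b)^{p−1}·(a·ψ₁^p − b·ψ₂^p) ≥ (1/2)·(a − b)^p·(max{ψ₁, ψ₂})^p − C·(max{a, b})^p·|ψ₁ − ψ₂|^p. -/
open Real

/-- Bernoulli-type: for `0 ≤ x ≤ y` and `1 ≤ p`, `y^p - x^p ≤ p * y^(p-1) * (y - x)`. -/
lemma rpow_sub_rpow_le_aux (p : ℝ) (hp : 1 ≤ p) {x y : ℝ} (hx : 0 ≤ x) (hxy : x ≤ y) :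
    y ^ p - x ^ p ≤ p * y ^ (p - 1) * (y - x) := by
  have hy : 0 ≤ y := hx.trans hxy
  rcases eq_or_lt_of_le hy with h0 | h0
  · have hx0 : x = 0 := le_antisymm (hxy.trans h0.ge) hx
    simp [← h0, hx0, Real.zero_rpow (by positivity : p ≠ 0)]
  · set s : ℝ := x / y - 1 with hs
    have hs1 : -1 ≤ s := by
      have : 0 ≤ x / y := div_nonneg hx hy
      simp only [hs]; linarith
    have hb := one_add_mul_self_le_rpow_one_add hs1 hp
    have h1s : (1 : ℝ) + s = x / y := by simp [hs]
    rw [h1s] at hb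
    have hdiv : (x / y) ^ p = x ^ p / y ^ p := Real.div_rpow hx hy p
    rw [hdiv] at hb
    have hyp : (0 : ℝ) < y ^ p := Real.rpow_pos_of_pos h0 p
    have hb2 : (1 + p * s) * y ^ p ≤ x ^ p := by
      calc (1 + p * s) * y ^ p ≤ x ^ p / y ^ p * y ^ p :=
            mul_le_mul_of_nonneg_right hb hyp.le
        _ = x ^ p := div_mul_cancel₀ _ hyp.ne'
    have hy1 : y ^ p = y ^ (p - 1) * y := by
      rw [← Real.rpow_add_one h0.ne' (p - 1)]; ring_nf
    have hsy : s * y = x - y := by rw [hs, sub_mul, div_mul_cancel₀ x h0.ne', one_mul]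
    have hkey : p * s * y ^ p = p * y ^ (p - 1) * (x - y) := by
      rw [hy1, ← hsy]; ring
    linarith [hb2, hkey]

/-- Pointwise estimate (3.4) in the energy estimate for subsolutions: for `p > 1` there is
`C = C(p) > 0` such that for all `a ≥ b ≥ 0` and `ψ₁, ψ₂ ≥ 0`,
`(a-b)^{p-1}(a ψ₁^p - b ψ₂^p) ≥ (1/2)(a-b)^p max{ψ₁,ψ₂}^p - C max{a,b}^p |ψ₁-ψ₂|^p`. -/
theorem subsolution_pointwise_estimate (p : ℝ) (hp : 1 < p) :
    ∃ C : ℝ, 0 < C ∧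
      ∀ a b ψ₁ ψ₂ : ℝ, b ≤ a → 0 ≤ b → 0 ≤ ψ₁ → 0 ≤ ψ₂ →
        (a - b) ^ (p - 1) * (a * ψ₁ ^ p - b * ψ₂ ^ p) ≥
          (1 / 2) * (a - b) ^ p * (max ψ₁ ψ₂) ^ p -
            C * (max a b) ^ p * |ψ₁ - ψ₂| ^ p := by
  have hp0 : (0 : ℝ) < p := lt_trans one_pos hp
  have hp1 : (0 : ℝ) < p - 1 := by linarith
  refine ⟨(2 * p) ^ p, Real.rpow_pos_of_pos (by linarith) p, ?_⟩
  intro a b ψ₁ ψ₂ hba hb h1 h2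
  have ha : 0 ≤ a := hb.trans hba
  have hd : 0 ≤ a - b := by linarith
  have hmaxab : max a b = a := max_eq_left hba
  have hdp : (a - b) ^ p = (a - b) ^ (p - 1) * (a - b) := by
    have hpe : p - 1 + 1 = p := by ring
    nth_rewrite 1 [← hpe]
    rw [Real.rpow_add' hd (by rw [hpe]; exact hp0.ne'), Real.rpow_one]
  rw [hmaxab, ge_iff_le]
  have hCpos : (0 : ℝ) ≤ (2 * p) ^ p * a ^ p * |ψ₁ - ψ₂| ^ p := by
    have := Real.rpow_pos_of_pos (show (0:ℝ) < 2 * p by linarith) p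
    have h' : (0:ℝ) ≤ a ^ p := Real.rpow_nonneg ha p
    have h'' : (0:ℝ) ≤ |ψ₁ - ψ₂| ^ p := Real.rpow_nonneg (abs_nonneg _) p
    positivity
  rcases le_total ψ₂ ψ₁ with h | h
  · -- easy case: ψ₁ = max
    rw [max_eq_left h]
    have key : (a - b) ^ p * ψ₁ ^ p ≤ (a - b) ^ (p - 1) * (a * ψ₁ ^ p - b * ψ₂ ^ p) := by
      rw [hdp]
      have h1' : b * ψ₂ ^ p ≤ b * ψ₁ ^ p :=
        mul_le_mul_of_nonneg_left (Real.rpow_le_rpow h2 h hp0.le) hb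
      have hnn : (0 : ℝ) ≤ (a - b) ^ (p - 1) := Real.rpow_nonneg hd _
      nlinarith
    have hposx : (0 : ℝ) ≤ (a - b) ^ p * ψ₁ ^ p :=
      mul_nonneg (Real.rpow_nonneg hd _) (Real.rpow_nonneg h1 _)
    linarith
  · -- main case: ψ₂ = max
    rw [max_eq_right h]
    have hδ : 0 ≤ ψ₂ - ψ₁ := by linarith
    have habs : |ψ₁ - ψ₂| = ψ₂ - ψ₁ := by rw [abs_sub_comm, abs_of_nonneg hδ]
    rw [habs]
    have stepA : ψ₂ ^ p - ψ₁ ^ p ≤ p * ψ₂ ^ (p - 1) * (ψ₂ - ψ₁) :=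
      rpow_sub_rpow_le_aux p hp.le h1 h
    -- Young's inequality setup
    have hq : (p / (p - 1)).HolderConjugate p :=
      (Real.HolderConjugate.conjExponent hp).symm
    set q : ℝ := p / (p - 1) with hqd
    have hq1 : 1 < q := hq.lt
    have ht0 : (0 : ℝ) < ((1:ℝ)/2) ^ ((p-1)/p) := Real.rpow_pos_of_pos (by norm_num) _
    set t : ℝ := ((1:ℝ)/2) ^ ((p-1)/p) with htd
    have hdψ : (0:ℝ) ≤ (a - b) * ψ₂ := mul_nonneg hd h2
    set u : ℝ := t * ((a - b) * ψ₂) ^ (p - 1) with hud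
    set v : ℝ := t⁻¹ * (p * a * (ψ₂ - ψ₁)) with hvd
    have hu0 : 0 ≤ u := mul_nonneg ht0.le (Real.rpow_nonneg hdψ _)
    have hv0 : 0 ≤ v := by
      have : 0 ≤ p * a * (ψ₂ - ψ₁) := by positivity
      exact mul_nonneg (inv_nonneg.2 ht0.le) this
    have young := Real.young_inequality_of_nonneg hu0 hv0 hq
    have huv : u * v = ((a - b) * ψ₂) ^ (p - 1) * (p * a * (ψ₂ - ψ₁)) := by
      rw [hud, hvd]; field_simp
    have hpne : p ≠ 0 := hp0.ne'
    have hp1ne : p - 1 ≠ 0 := hp1.ne'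
    have e1 : (p - 1) / p * q = 1 := by rw [hqd]; field_simp
    have e2 : (p - 1) * q = p := by rw [hqd]; field_simp
    have e3 : (p - 1) / p * p = p - 1 := by field_simp
    have huq : u ^ q = (1/2) * ((a - b) * ψ₂) ^ p := by
      rw [hud, Real.mul_rpow ht0.le (Real.rpow_nonneg hdψ _), htd,
        ← Real.rpow_mul (by norm_num : (0:ℝ) ≤ 1/2),
        ← Real.rpow_mul hdψ, e1, e2, Real.rpow_one]
    have hX0 : (0:ℝ) ≤ p * a * (ψ₂ - ψ₁) := by positivity
    have hvp : v ^ p = 2 ^ (p - 1) * (p * a * (ψ₂ - ψ₁)) ^ p := by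
      rw [hvd, Real.mul_rpow (inv_nonneg.2 ht0.le) hX0,
        Real.inv_rpow ht0.le, htd, ← Real.rpow_mul (by norm_num : (0:ℝ) ≤ 1/2), e3]
      have : ((1:ℝ)/2) ^ (p - 1) = (2 ^ (p - 1) : ℝ)⁻¹ := by
        rw [one_div, Real.inv_rpow (by norm_num : (0:ℝ) ≤ 2)]
      rw [this, inv_inv]
    have hvp_le : v ^ p ≤ (2 * p) ^ p * (a ^ p * (ψ₂ - ψ₁) ^ p) := by
      rw [hvp]
      have h2le : (2:ℝ) ^ (p - 1) ≤ 2 ^ p :=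
        Real.rpow_le_rpow_of_exponent_le one_le_two (by linarith)
      have hXp : (p * a * (ψ₂ - ψ₁)) ^ p = p ^ p * (a ^ p * (ψ₂ - ψ₁) ^ p) := by
        rw [Real.mul_rpow (by positivity) hδ, Real.mul_rpow hp0.le ha]; ring
      have h2p : ((2 : ℝ) * p) ^ p = 2 ^ p * p ^ p :=
        Real.mul_rpow (by norm_num) hp0.le
      have hXnn : (0:ℝ) ≤ (p * a * (ψ₂ - ψ₁)) ^ p := Real.rpow_nonneg hX0 _
      calc (2:ℝ) ^ (p - 1) * (p * a * (ψ₂ - ψ₁)) ^ p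
          ≤ 2 ^ p * (p * a * (ψ₂ - ψ₁)) ^ p := mul_le_mul_of_nonneg_right h2le hXnn
        _ = (2 * p) ^ p * (a ^ p * (ψ₂ - ψ₁) ^ p) := by rw [hXp, h2p]; ring
    -- combine Young
    have hqpos : (0:ℝ) < q := lt_trans one_pos hq1
    have hdivq : u ^ q / q ≤ u ^ q := div_le_self (Real.rpow_nonneg hu0 _) hq1.le
    have hdivp : v ^ p / p ≤ v ^ p := div_le_self (Real.rpow_nonneg hv0 _) hp.le
    have stepB : ((a - b) * ψ₂) ^ (p - 1) * (p * a * (ψ₂ - ψ₁)) ≤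
        (1/2) * ((a - b) * ψ₂) ^ p + (2 * p) ^ p * (a ^ p * (ψ₂ - ψ₁) ^ p) := by
      calc ((a - b) * ψ₂) ^ (p - 1) * (p * a * (ψ₂ - ψ₁)) = u * v := huv.symm
        _ ≤ u ^ q / q + v ^ p / p := young
        _ ≤ u ^ q + v ^ p := add_le_add hdivq hdivp
        _ ≤ (1/2) * ((a - b) * ψ₂) ^ p + (2 * p) ^ p * (a ^ p * (ψ₂ - ψ₁) ^ p) := by
            rw [huq]; exact add_le_add_right hvp_le _
    have hm1 : ((a - b) * ψ₂) ^ (p - 1) = (a - b) ^ (p - 1) * ψ₂ ^ (p - 1) :=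
      Real.mul_rpow hd h2
    have hm2 : ((a - b) * ψ₂) ^ p = (a - b) ^ p * ψ₂ ^ p := Real.mul_rpow hd h2
    rw [hm1, hm2] at stepB
    have eqn : (a - b) ^ (p - 1) * (a * ψ₁ ^ p - b * ψ₂ ^ p) =
        (a - b) ^ p * ψ₂ ^ p - (a - b) ^ (p - 1) * a * (ψ₂ ^ p - ψ₁ ^ p) := by
      rw [hdp]; ring
    have hnn : (0:ℝ) ≤ (a - b) ^ (p - 1) * a :=
      mul_nonneg (Real.rpow_nonneg hd _) ha
    have F5 : (a - b) ^ (p - 1) * a * (ψ₂ ^ p - ψ₁ ^ p) ≤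
        (a - b) ^ (p - 1) * a * (p * ψ₂ ^ (p - 1) * (ψ₂ - ψ₁)) :=
      mul_le_mul_of_nonneg_left stepA hnn
    have F6 : (a - b) ^ (p - 1) * a * (p * ψ₂ ^ (p - 1) * (ψ₂ - ψ₁)) =
        (a - b) ^ (p - 1) * ψ₂ ^ (p - 1) * (p * a * (ψ₂ - ψ₁)) := by ring
    rw [F6] at F5
    linarith [stepB, F5, eqn]
end

section
/- Let p ≥ 2 and let k be a real number. For all real numbers a, b and all ψ₁, ψ₂ ≥ 0, writing w_a = max{a − k, 0} and w_b = max{b − k, 0}, one has |a − b|^{p−2}(a − b)·(w_a·ψ₁^p − w_b·ψ₂^p) ≥ |w_a − w_b|^{p−2}(w_a − w_b)·(w_a·ψ₁^p − w_b·ψ₂^p). -/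
lemma key_mono (p : ℝ) (hp : 2 ≤ p) {s t : ℝ} (hs : 0 ≤ s) (hst : s ≤ t) :
    s ^ (p - 2) * s ≤ t ^ (p - 2) * t :=
  mul_le_mul (Real.rpow_le_rpow hs hst (by linarith)) hst hs
    (Real.rpow_nonneg (hs.trans hst) _)

/-- Pointwise truncation estimate in the energy estimate for subsolutions: for `p ≥ 2`,
`k ∈ ℝ`, all `a, b ∈ ℝ` and `ψ₁, ψ₂ ≥ 0`, with `w_a = (a-k)₊` and `w_b = (b-k)₊`,
`|a-b|^{p-2}(a-b)(w_a ψ₁^p - w_b ψ₂^p) ≥ |w_a-w_b|^{p-2}(w_a-w_b)(w_a ψ₁^p - w_b ψ₂^p)`. -/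
theorem truncation_pointwise_estimate (p k : ℝ) (hp : 2 ≤ p) :
    ∀ a b ψ₁ ψ₂ : ℝ, 0 ≤ ψ₁ → 0 ≤ ψ₂ →
      |a - b| ^ (p - 2) * (a - b) *
          (max (a - k) 0 * ψ₁ ^ p - max (b - k) 0 * ψ₂ ^ p) ≥
        |max (a - k) 0 - max (b - k) 0| ^ (p - 2) * (max (a - k) 0 - max (b - k) 0) *
          (max (a - k) 0 * ψ₁ ^ p - max (b - k) 0 * ψ₂ ^ p) := by
  intro a b ψ₁ ψ₂ h1 h2
  have hψ1 : (0:ℝ) ≤ ψ₁ ^ p := Real.rpow_nonneg h1 p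
  have hψ2 : (0:ℝ) ≤ ψ₂ ^ p := Real.rpow_nonneg h2 p
  rcases le_or_gt (a - k) 0 with ha | ha
  · rcases le_or_gt (b - k) 0 with hb | hb
    · -- both truncations vanish, D = 0
      rw [max_eq_right ha, max_eq_right hb]
      simp
    · -- wa = 0, wb = b - k > 0 : D ≤ 0
      rw [max_eq_right ha, max_eq_left hb.le]
      have hD : (0:ℝ) * ψ₁ ^ p - (b - k) * ψ₂ ^ p ≤ 0 := by nlinarith
      apply mul_le_mul_of_nonpos_right _ hD
      have hab : a - b ≤ -(b - k) := by linarith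
      have h1' : |a - b| = b - a := by
        rw [abs_of_nonpos (by linarith)]; ring
      have h2' : |0 - (b - k)| = b - k := by
        rw [abs_of_nonpos (by linarith)]; ring
      rw [h1', h2']
      have := key_mono p hp hb.le (show b - k ≤ b - a by linarith)
      nlinarith
  · rcases le_or_gt (b - k) 0 with hb | hb
    · -- wb = 0, wa = a - k > 0 : D ≥ 0
      rw [max_eq_left ha.le, max_eq_right hb]
      have hD : (0:ℝ) ≤ (a - k) * ψ₁ ^ p - 0 * ψ₂ ^ p := by nlinarith
      apply mul_le_mul_of_nonneg_right _ hD
      have h1' : |a - k - 0| = a - k := by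
        rw [abs_of_nonneg (by linarith)]; ring
      have h2' : |a - b| = a - b := abs_of_nonneg (by linarith)
      rw [h1', h2']
      have := key_mono p hp ha.le (show a - k ≤ a - b by linarith)
      nlinarith
    · -- both active: equality
      rw [max_eq_left ha.le, max_eq_left hb.le]
      have : a - k - (b - k) = a - b := by ring
      rw [this]
end

section
/- Let p > 1 and let k be a real number. For all real numbers a and b, one has |a − b|^{p−2}(a − b)·(a − k)₊ ≥ −((b − k)₊)^{p−1}·(a − k)₊. -/
/-- Pointwise estimate for the nonlocal tail term (estimate of `J_ε²`): for `p > 1`, `k ∈ ℝ`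
and all real `a, b`, `|a-b|^{p-2}(a-b)(a-k)₊ ≥ -((b-k)₊)^{p-1} (a-k)₊`. -/
theorem tail_pointwise_estimate (p k : ℝ) (hp : 1 < p) :
    ∀ a b : ℝ,
      |a - b| ^ (p - 2) * (a - b) * max (a - k) 0 ≥
        -(max (b - k) 0) ^ (p - 1) * max (a - k) 0 := by
  intro a b
  rcases le_or_gt a k with hak | hak
  · have h0 : max (a - k) 0 = 0 := max_eq_right (by linarith)
    rw [h0, mul_zero, mul_zero]
  · have hA : max (a - k) 0 = a - k := max_eq_left (by linarith)
    have hApos : (0:ℝ) < a - k := by linarith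
    rcases le_or_gt b a with hba | hba
    · -- a ≥ b : LHS ≥ 0 ≥ RHS
      have hR : -(max (b - k) 0) ^ (p - 1) * max (a - k) 0 ≤ 0 := by
        apply mul_nonpos_of_nonpos_of_nonneg
        · simp only [neg_nonpos]
          exact Real.rpow_nonneg (le_max_right _ _) _
        · exact le_max_right _ _
      have hL : 0 ≤ |a - b| ^ (p - 2) * (a - b) * max (a - k) 0 := by
        apply mul_nonneg (mul_nonneg (Real.rpow_nonneg (abs_nonneg _) _) (by linarith))
          (le_max_right _ _)
      linarith
    · -- b > a > k
      have hab : |a - b| = b - a := by rw [abs_sub_comm]; exact abs_of_pos (by linarith)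
      have hba' : (0:ℝ) < b - a := by linarith
      have hbk : max (b - k) 0 = b - k := max_eq_left (by linarith)
      rw [hab, hA, hbk]
      have key : (b - a) ^ (p - 2) * (a - b) = -(b - a) ^ (p - 1) := by
        have : (b - a) ^ (p - 2) * (b - a) = (b - a) ^ (p - 1) := by
          rw [show p - 1 = (p - 2) + 1 by ring, Real.rpow_add hba', Real.rpow_one]
        nlinarith [this]
      rw [key]
      have hmono : (b - a) ^ (p - 1) ≤ (b - k) ^ (p - 1) := by
        apply Real.rpow_le_rpow (le_of_lt hba') (by linarith) (by linarith)
      nlinarith [hmono]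
end

section
/- Let p > 1. For all real numbers v₁, v₂ > 0 and all ψ₁, ψ₂ ≥ 0 one has |v₁ − v₂|^{p−2}(v₁ − v₂)·((v₁/v₂)^{p−1}·ψ₁ − (v₂/v₁)^{p−1}·ψ₂) ≥ |v₁ − v₂|^{p−2}(v₁ − v₂)·(ψ₁ − ψ₂). -/
/-- Pointwise inequality showing the reciprocal of a positive supersolution is a subsolution:
for `p > 1`, all `v₁, v₂ > 0` and `ψ₁, ψ₂ ≥ 0`,
`|v₁-v₂|^{p-2}(v₁-v₂)((v₁/v₂)^{p-1} ψ₁ - (v₂/v₁)^{p-1} ψ₂)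
 ≥ |v₁-v₂|^{p-2}(v₁-v₂)(ψ₁ - ψ₂)`. -/
theorem reciprocal_subsolution_pointwise (p : ℝ) (hp : 1 < p) :
    ∀ v₁ v₂ ψ₁ ψ₂ : ℝ, 0 < v₁ → 0 < v₂ → 0 ≤ ψ₁ → 0 ≤ ψ₂ →
      |v₁ - v₂| ^ (p - 2) * (v₁ - v₂) *
          ((v₁ / v₂) ^ (p - 1) * ψ₁ - (v₂ / v₁) ^ (p - 1) * ψ₂) ≥
        |v₁ - v₂| ^ (p - 2) * (v₁ - v₂) * (ψ₁ - ψ₂) := by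
  intro v₁ v₂ ψ₁ ψ₂ hv₁ hv₂ hψ₁ hψ₂
  have hp1 : (0:ℝ) ≤ p - 1 := by linarith
  rcases lt_trichotomy v₁ v₂ with h | h | h
  · -- v₁ < v₂ : factor negative, need inner reversed
    have hfac : |v₁ - v₂| ^ (p - 2) * (v₁ - v₂) ≤ 0 := by
      apply mul_nonpos_of_nonneg_of_nonpos
      · exact Real.rpow_nonneg (abs_nonneg _) _
      · linarith
    apply mul_le_mul_of_nonpos_left _ hfac
    have h1 : v₁ / v₂ ≤ 1 := by
      rw [div_le_one hv₂]; linarith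
    have h2 : 1 ≤ v₂ / v₁ := by
      rw [le_div_iff₀ hv₁]; linarith
    have e1 : (v₁ / v₂) ^ (p - 1) ≤ 1 := by
      calc (v₁ / v₂) ^ (p - 1) ≤ 1 ^ (p - 1) :=
        Real.rpow_le_rpow (le_of_lt (div_pos hv₁ hv₂)) h1 hp1
      _ = 1 := Real.one_rpow _
    have e2 : 1 ≤ (v₂ / v₁) ^ (p - 1) := by
      calc (1:ℝ) = 1 ^ (p - 1) := (Real.one_rpow _).symm
      _ ≤ (v₂ / v₁) ^ (p - 1) := Real.rpow_le_rpow zero_le_one h2 hp1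
    nlinarith [mul_le_mul_of_nonneg_right e1 hψ₁, mul_le_mul_of_nonneg_right e2 hψ₂]
  · simp [h, sub_self]
  · have hfac : 0 ≤ |v₁ - v₂| ^ (p - 2) * (v₁ - v₂) := by
      apply mul_nonneg (Real.rpow_nonneg (abs_nonneg _) _)
      linarith
    apply mul_le_mul_of_nonneg_left _ hfac
    have h1 : 1 ≤ v₁ / v₂ := by rw [le_div_iff₀ hv₂]; linarith
    have h2 : v₂ / v₁ ≤ 1 := by rw [div_le_one hv₁]; linarith
    have e1 : 1 ≤ (v₁ / v₂) ^ (p - 1) := by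
      calc (1:ℝ) = 1 ^ (p - 1) := (Real.one_rpow _).symm
      _ ≤ (v₁ / v₂) ^ (p - 1) := Real.rpow_le_rpow zero_le_one h1 hp1
    have e2 : (v₂ / v₁) ^ (p - 1) ≤ 1 := by
      calc (v₂ / v₁) ^ (p - 1) ≤ 1 ^ (p - 1) :=
        Real.rpow_le_rpow (le_of_lt (div_pos hv₂ hv₁)) h2 hp1
      _ = 1 := Real.one_rpow _
    nlinarith [mul_le_mul_of_nonneg_right e1 hψ₁, mul_le_mul_of_nonneg_right e2 hψ₂]
end

section
/- Let p > 1, K > 0, λ > 0 and b ∈ ℝ, and let T₀ < T₁ be real numbers. Suppose W : [T₀, T₁] → ℝ is continuously differentiable, nonincreasing, and satisfies W(T₀) = b. Suppose m : [T₀, T₁] → [0, ∞) is a measurable function such that W′(t) + (m(t)/K)·(b + λ − W(t))^p ≤ 0 for all t ∈ [T₀, T₁]. Then ∫_{T₀}^{T₁} m(t) dt ≤ K/((p − 1)·λ^{p−1}). -/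
/-- The differential-inequality step in the logarithmic estimate (Lemma 5.3): if `W` is a
nonincreasing `C¹` function on `[T₀, T₁]` with `W(T₀) = b` and `m ≥ 0` is measurable with
`W'(t) + (m(t)/K)(b + λ - W(t))^p ≤ 0` on `[T₀, T₁]`, then
`∫_{T₀}^{T₁} m(t) dt ≤ K/((p-1) λ^{p-1})`. -/
theorem log_estimate_ode_step (p K lam b T₀ T₁ : ℝ) (hp : 1 < p) (hK : 0 < K)
    (hlam : 0 < lam) (hT : T₀ < T₁) (W W' m : ℝ → ℝ)
    (hW : ∀ t ∈ Set.Icc T₀ T₁, HasDerivWithinAt W (W' t) (Set.Icc T₀ T₁) t)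
    (hW' : ContinuousOn W' (Set.Icc T₀ T₁))
    (hWanti : AntitoneOn W (Set.Icc T₀ T₁))
    (hW0 : W T₀ = b)
    (hm : Measurable m) (hm0 : ∀ t ∈ Set.Icc T₀ T₁, 0 ≤ m t)
    (hineq : ∀ t ∈ Set.Icc T₀ T₁, W' t + (m t / K) * (b + lam - W t) ^ p ≤ 0) :
    ∫ t in T₀..T₁, m t ≤ K / ((p - 1) * lam ^ (p - 1)) := by
  have hIcc : Set.uIcc T₀ T₁ = Set.Icc T₀ T₁ := Set.uIcc_of_le hT.le
  set c : ℝ → ℝ := fun t => b + lam - W t with hc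
  have hclam : ∀ t ∈ Set.Icc T₀ T₁, lam ≤ c t := by
    intro t ht
    have h1 : W t ≤ W T₀ := hWanti (Set.left_mem_Icc.2 hT.le) ht ht.1
    simp only [hc]
    rw [hW0] at h1; linarith
  have hcpos : ∀ t ∈ Set.Icc T₀ T₁, 0 < c t := fun t ht => lt_of_lt_of_le hlam (hclam t ht)
  have hWc : ContinuousOn W (Set.Icc T₀ T₁) :=
    fun t ht => (hW t ht).continuousWithinAt
  have hcc : ContinuousOn c (Set.Icc T₀ T₁) :=
    (continuousOn_const.sub hWc)
  -- the comparison function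
  set g : ℝ → ℝ := fun t => (-W' t) * K * (c t) ^ (-p) with hg
  set F : ℝ → ℝ := fun t => (K / (1 - p)) * (c t) ^ (1 - p) with hF
  have hcne : ∀ t ∈ Set.Icc T₀ T₁, c t ≠ 0 := fun t ht => (hcpos t ht).ne'
  have hFc : ContinuousOn F (Set.Icc T₀ T₁) :=
    continuousOn_const.mul (hcc.rpow_const fun t ht => Or.inl (hcne t ht))
  have hgc : ContinuousOn g (Set.Icc T₀ T₁) :=
    ((hW'.neg.mul continuousOn_const)).mul (hcc.rpow_const fun t ht => Or.inl (hcne t ht))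
  have hFd : ∀ t ∈ Set.Icc T₀ T₁, HasDerivWithinAt F (g t) (Set.Icc T₀ T₁) t := by
    intro t ht
    have h1 : HasDerivWithinAt c (-W' t) (Set.Icc T₀ T₁) t := (hW t ht).const_sub (b + lam)
    have h2 := (h1.rpow_const (p := 1 - p) (Or.inl (hcne t ht))).const_mul (K / (1 - p))
    convert h2 using 1
    case e'_4 => rfl
    case e'_5 => rfl
    have hp1 : (1 : ℝ) - p ≠ 0 := by linarith
    have : (1 : ℝ) - p - 1 = -p := by ring
    rw [this]
    field_simp
    ring
  have hgint : IntervalIntegrable g MeasureTheory.volume T₀ T₁ := by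
    apply ContinuousOn.intervalIntegrable
    rwa [hIcc]
  -- m ≤ g on Icc
  have hmg : ∀ t ∈ Set.Icc T₀ T₁, m t ≤ g t := by
    intro t ht
    have h1 := hineq t ht
    have hcp : 0 < (c t) ^ p := Real.rpow_pos_of_pos (hcpos t ht) p
    have hcnegp : (c t) ^ (-p) = ((c t) ^ p)⁻¹ := Real.rpow_neg (hcpos t ht).le p
    have h2 : m t / K * (c t) ^ p ≤ -W' t := by
      simp only [hc] at h1 ⊢; linarith
    have h3 : m t / K ≤ (-W' t) * ((c t) ^ p)⁻¹ := by
      rw [le_mul_inv_iff₀ hcp]; exact h2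
    have h4 : m t ≤ (-W' t) * ((c t) ^ p)⁻¹ * K := by
      calc m t = (m t / K) * K := by field_simp
        _ ≤ (-W' t) * ((c t) ^ p)⁻¹ * K := by
            exact mul_le_mul_of_nonneg_right h3 hK.le
    simp only [hg, hcnegp]
    linarith
  have hW'le : ∀ t ∈ Set.Icc T₀ T₁, 0 ≤ g t := by
    intro t ht
    exact le_trans (hm0 t ht) (hmg t ht)
  -- integrability of m
  have hmint : IntervalIntegrable m MeasureTheory.volume T₀ T₁ := by
    rw [intervalIntegrable_iff_integrableOn_Icc_of_le hT.le]
    apply MeasureTheory.Integrable.mono' ((hgc.integrableOn_Icc))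
    · exact hm.aestronglyMeasurable.restrict
    · filter_upwards [MeasureTheory.ae_restrict_mem measurableSet_Icc] with t ht
      rw [Real.norm_eq_abs, abs_of_nonneg (hm0 t ht)]
      exact hmg t ht
  -- integral comparison
  have hint1 : ∫ t in T₀..T₁, m t ≤ ∫ t in T₀..T₁, g t := by
    apply intervalIntegral.integral_mono_on hT.le hmint hgint
    exact hmg
  -- FTC
  have hint2 : ∫ t in T₀..T₁, g t = F T₁ - F T₀ := by
    apply intervalIntegral.integral_eq_sub_of_hasDeriv_right_of_le hT.le hFc _ hgint
    intro t ht
    have ht' : t ∈ Set.Icc T₀ T₁ := Set.mem_Icc_of_Ioo ht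
    exact ((hFd t ht').hasDerivAt (Icc_mem_nhds ht.1 ht.2)).hasDerivWithinAt
  rw [hint2] at hint1
  refine le_trans hint1 ?_
  -- final estimate
  have hcT₀ : c T₀ = lam := by simp [hc, hW0]
  have hcT₁pos : 0 < c T₁ := hcpos T₁ (Set.right_mem_Icc.2 hT.le)
  have hT1nn : 0 ≤ (c T₁) ^ (1 - p) := (Real.rpow_pos_of_pos hcT₁pos _).le
  have hlamp : lam ^ (1 - p) = (lam ^ (p - 1))⁻¹ := by
    rw [show (1 : ℝ) - p = -(p - 1) by ring, Real.rpow_neg hlam.le]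
  have hppos : 0 < p - 1 := by linarith
  have hlp : 0 < lam ^ (p - 1) := Real.rpow_pos_of_pos hlam _
  have hexp : F T₁ - F T₀ = (K / (p - 1)) * (lam ^ (1 - p) - (c T₁) ^ (1 - p)) := by
    have hdiv : K / (1 - p) = -(K / (p - 1)) := by
      rw [show (1 : ℝ) - p = -(p - 1) by ring, div_neg]
    simp only [hF, hcT₀, hdiv]
    ring
  rw [hexp, hlamp]
  have h1 : (K / (p - 1)) * ((lam ^ (p - 1))⁻¹ - (c T₁) ^ (1 - p))
      ≤ (K / (p - 1)) * (lam ^ (p - 1))⁻¹ := by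
    apply mul_le_mul_of_nonneg_left _ (div_nonneg hK.le hppos.le)
    linarith
  refine le_trans h1 (le_of_eq ?_)
  field_simp
end

section
/- Let p > 2. There exists a constant λ = λ(p) > 0, depending only on p, such that for all real numbers v, k > 0, writing ξ((v−k)₊) = (p − 1)·∫_{k}^{v} (η − k)₊·η^{p−2} dη, one has (1/λ)·(v + k)^{p−2}·((v − k)₊)² ≤ ξ((v−k)₊) ≤ λ·(v + k)^{p−2}·((v − k)₊)². -/
open intervalIntegral in
/-- Lemma 2.8: for `p > 2` there is `λ = λ(p) > 0` such that for all `v, k > 0`, with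
`ξ((v-k)₊) = (p-1) ∫_k^v (η-k)₊ η^{p-2} dη`, one has
`(1/λ)(v+k)^{p-2}((v-k)₊)² ≤ ξ((v-k)₊) ≤ λ (v+k)^{p-2}((v-k)₊)²`. -/
theorem aux_function_comparison (p : ℝ) (hp : 2 < p) :
    ∃ lam : ℝ, 0 < lam ∧
      ∀ v k : ℝ, 0 < v → 0 < k →
        (1 / lam) * (v + k) ^ (p - 2) * (max (v - k) 0) ^ 2 ≤
            (p - 1) * ∫ η in k..v, max (η - k) 0 * η ^ (p - 2) ∧
          (p - 1) * (∫ η in k..v, max (η - k) 0 * η ^ (p - 2)) ≤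
            lam * ((v + k) ^ (p - 2) * (max (v - k) 0) ^ 2) := by
  have hp1 : (0:ℝ) < p - 1 := by linarith
  have hp2 : (0:ℝ) ≤ p - 2 := by linarith
  have hE : (0:ℝ) < (2:ℝ) ^ p := Real.rpow_pos_of_pos (by norm_num) p
  have hD : (0:ℝ) < (2:ℝ) ^ (p - 2) := Real.rpow_pos_of_pos (by norm_num) _
  have hED : (2:ℝ) ^ p = 4 * (2:ℝ) ^ (p - 2) := by
    rw [show p = (p - 2) + 2 by ring, Real.rpow_add (by norm_num)]
    rw [show (2:ℝ) = ((2:ℕ):ℝ) by norm_num, Real.rpow_natCast]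
    ring
  set lam : ℝ := (2:ℝ) ^ p / (p - 1) + p with hlam_def
  have hlam : 0 < lam := by positivity
  refine ⟨lam, hlam, ?_⟩
  intro v k hv hk
  rcases le_or_gt v k with hvk | hkv
  · have hzero : ∫ η in k..v, max (η - k) 0 * η ^ (p - 2) = 0 := by
      rw [intervalIntegral.integral_congr (g := fun _ => (0:ℝ))]
      · simp
      · intro x hx
        rw [Set.uIcc_of_ge hvk] at hx
        simp [max_eq_right, sub_nonpos.mpr hx.2]
    have hmax : max (v - k) 0 = 0 := max_eq_right (by linarith)
    rw [hzero, hmax]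
    norm_num
  · have hkv' : k ≤ v := hkv.le
    have hmax : max (v - k) 0 = v - k := max_eq_left (by linarith)
    have Hi : ∀ a b : ℝ, k ≤ a → a ≤ b →
        IntervalIntegrable (fun η => max (η - k) 0 * η ^ (p - 2))
          MeasureTheory.volume a b := by
      intro a b ha hab
      apply ContinuousOn.intervalIntegrable
      apply ContinuousOn.mul (by fun_prop)
      intro x hx
      have hx0 : x ≠ 0 := by
        rw [Set.uIcc_of_le hab] at hx
        nlinarith [hx.1]
      exact (Real.continuousAt_rpow_const x (p-2) (Or.inl hx0)).continuousWithinAt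
    set m : ℝ := (k + v) / 2 with hm_def
    have hkm : k ≤ m := by simp only [hm_def]; linarith
    have hmv : m ≤ v := by simp only [hm_def]; linarith
    set A : ℝ := (v + k) ^ (p - 2) with hA_def
    have hA : 0 < A := Real.rpow_pos_of_pos (by linarith) _
    set c : ℝ := (v - k) / 2 * ((v + k) / 2) ^ (p - 2) with hc_def
    have hAc : ((v + k) / 2) ^ (p - 2) = A / 2 ^ (p - 2) := by
      rw [hA_def, Real.div_rpow (by linarith) (by norm_num)]
    -- lower bound for the integral
    have hlow1 : (v - k) / 2 * c ≤ ∫ η in m..v, max (η - k) 0 * η ^ (p - 2) := by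
      have hc_int : ∫ η in m..v, c = (v - k) / 2 * c := by
        rw [intervalIntegral.integral_const, smul_eq_mul, hm_def]
        ring_nf
      rw [← hc_int]
      apply intervalIntegral.integral_mono_on hmv
        (intervalIntegrable_const) (Hi m v hkm hmv)
      intro x hx
      have h1 : (v - k) / 2 ≤ max (x - k) 0 := by
        rw [max_eq_left (by simp only [hm_def] at hx; linarith [hx.1])]
        simp only [hm_def] at hx; linarith [hx.1]
      have h2 : ((v + k) / 2) ^ (p - 2) ≤ x ^ (p - 2) := by
        apply Real.rpow_le_rpow (by linarith) _ hp2
        simp only [hm_def] at hx ⊢; linarith [hx.1]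
      have := mul_le_mul h1 h2 (by positivity) (le_trans (by linarith) h1)
      simpa [hc_def] using this
    have hsplit : ∫ η in k..v, max (η - k) 0 * η ^ (p - 2)
        = (∫ η in k..m, max (η - k) 0 * η ^ (p - 2))
          + ∫ η in m..v, max (η - k) 0 * η ^ (p - 2) :=
      (intervalIntegral.integral_add_adjacent_intervals (Hi k m le_rfl hkm)
        (Hi m v hkm hmv)).symm
    have hnn : 0 ≤ ∫ η in k..m, max (η - k) 0 * η ^ (p - 2) := by
      apply intervalIntegral.integral_nonneg hkm
      intro x hx
      have : (0:ℝ) ≤ x := by linarith [hx.1]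
      positivity
    have hlow : (v - k) / 2 * c ≤ ∫ η in k..v, max (η - k) 0 * η ^ (p - 2) := by
      rw [hsplit]; linarith
    -- upper bound for the integral
    have hup : (∫ η in k..v, max (η - k) 0 * η ^ (p - 2)) ≤ (v - k) ^ 2 / 2 * A := by
      have h1 : (∫ η in k..v, max (η - k) 0 * η ^ (p - 2))
          ≤ ∫ η in k..v, (η - k) * A := by
        apply intervalIntegral.integral_mono_on hkv' (Hi k v le_rfl hkv')
        · apply ContinuousOn.intervalIntegrable; fun_prop
        · intro x hx
          rw [max_eq_left (by linarith [hx.1])]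
          apply mul_le_mul_of_nonneg_left _ (by linarith [hx.1])
          exact Real.rpow_le_rpow (by linarith [hx.1]) (by linarith [hx.2]) hp2
      have h2 : ∫ η in k..v, (η - k) * A = (v - k) ^ 2 / 2 * A := by
        rw [intervalIntegral.integral_mul_const,
          intervalIntegral.integral_comp_sub_right (fun x => x) k, integral_id]
        ring
      linarith [h1, h2.le, h2.ge]
    constructor
    · -- lower inequality
      rw [hmax]
      have h1 : 1 / lam ≤ (p - 1) / 2 ^ p := by
        rw [div_le_div_iff₀ hlam hE, hlam_def]
        have h2 : (2:ℝ) ^ p / (p - 1) * (p - 1) = 2 ^ p := by field_simp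
        nlinarith [hp1, hE]
      have h3 : (1 / lam) * A * (v - k) ^ 2 ≤ (p - 1) / 2 ^ p * A * (v - k) ^ 2 := by
        have := mul_le_mul_of_nonneg_right h1 hA.le
        exact mul_le_mul_of_nonneg_right this (by positivity)
      have h4 : (p - 1) / 2 ^ p * A * (v - k) ^ 2 = (p - 1) * ((v - k) / 2 * c) := by
        rw [hc_def, hAc, hED]
        field_simp
        ring
      calc (1 / lam) * A * (v - k) ^ 2 ≤ (p - 1) * ((v - k) / 2 * c) := by
            rw [← h4]; exact h3
        _ ≤ (p - 1) * ∫ η in k..v, max (η - k) 0 * η ^ (p - 2) := by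
            exact mul_le_mul_of_nonneg_left hlow hp1.le
    · -- upper inequality
      rw [hmax]
      have h1 : (p - 1) * (∫ η in k..v, max (η - k) 0 * η ^ (p - 2))
          ≤ (p - 1) * ((v - k) ^ 2 / 2 * A) := mul_le_mul_of_nonneg_left hup hp1.le
      have h2 : (p - 1) * ((v - k) ^ 2 / 2 * A) ≤ lam * (A * (v - k) ^ 2) := by
        have hX : 0 ≤ A * (v - k) ^ 2 := mul_nonneg hA.le (sq_nonneg _)
        have hlp : (p - 1) / 2 ≤ lam := by
          rw [hlam_def]; linarith [div_nonneg hE.le hp1.le]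
        calc (p - 1) * ((v - k) ^ 2 / 2 * A) = (p - 1) / 2 * (A * (v - k) ^ 2) := by ring
          _ ≤ lam * (A * (v - k) ^ 2) := mul_le_mul_of_nonneg_right hlp hX
      exact le_trans h1 h2
end
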